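/- Let G be a finite graph with maximum degree Δ, let f be a proper k-coloring with k ≥ Δ + 1, and let y be a vertex with two distinct non-adjacent neighbors x and x' such that y is the unique neighbor of x colored f(y) and also the unique neighbor of x' colored f(y). Then there exists a color γ ≠ f(y) such that y has no neighbor of color γ other than possibly x and x'; moreover, recoloring x and x' with f(y) and recoloring y with γ yields a proper k-coloring of G. -/

import Mathlib

/-- Let f be a proper k-coloring of a finite graph G with k ≥ Δ(G) + 1 and
let y have two distinct non-adjacent neighbors x, x' for each of which y is the unique
neighbor colored f(y) (a solo neighbor). Then there is a color γ ≠ f(y) such that y has no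
neighbor of color γ other than possibly x and x', and recoloring x, x' with f(y) and y with γ
yields a proper coloring. -/
theorem stmt_16 {V C : Type*} [Fintype V] [Fintype C] [DecidableEq V] [DecidableEq C]
    (G : SimpleGraph V) [DecidableRel G.Adj]
    {k : ℕ} (hk : Fintype.card C = k) (hΔ : G.maxDegree + 1 ≤ k)
    (f : V → C) (hf : ∀ a b, G.Adj a b → f a ≠ f b)
    (y x x' : V) (hxx' : x ≠ x') (hnadj : ¬ G.Adj x x')
    (hyx : G.Adj y x) (hyx' : G.Adj y x')
    (hsolo : ∀ z, G.Adj x z → f z = f y → z = y)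
    (hsolo' : ∀ z, G.Adj x' z → f z = f y → z = y) :
    ∃ γ : C, γ ≠ f y ∧
      (∀ z, G.Adj y z → z ≠ x → z ≠ x' → f z ≠ γ) ∧
      (∀ a b, G.Adj a b →
        Function.update (Function.update (Function.update f x (f y)) x' (f y)) y γ a ≠
        Function.update (Function.update (Function.update f x (f y)) x' (f y)) y γ b) := by
  classical
  set N := G.neighborFinset y with hN
  set S : Finset C := insert (f y) ((N \ {x, x'}).image f) with hS
  have hxN : x ∈ N := by simp [hN, hyx]
  have hx'N : x' ∈ N := by simp [hN, hyx']
  have hpair : ({x, x'} : Finset V) ⊆ N := by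
    intro z hz
    simp only [Finset.mem_insert, Finset.mem_singleton] at hz
    rcases hz with rfl | rfl <;> assumption
  have hdeg2 : 2 ≤ N.card := by
    calc 2 = ({x, x'} : Finset V).card := by
            rw [Finset.card_insert_of_notMem (by simp [hxx']), Finset.card_singleton]
      _ ≤ N.card := Finset.card_le_card hpair
  have hdegΔ : N.card ≤ G.maxDegree := by
    have := G.degree_le_maxDegree y
    rwa [SimpleGraph.degree] at this
  have hScard : S.card < k := by
    have h1 : S.card ≤ ((N \ {x, x'}).image f).card + 1 := Finset.card_insert_le _ _
    have h2 : ((N \ {x, x'}).image f).card ≤ (N \ {x, x'}).card := Finset.card_image_le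
    have h3 : (N \ {x, x'}).card = N.card - 2 := by
      rw [Finset.card_sdiff_of_subset hpair]
      congr 1
      rw [Finset.card_insert_of_notMem (by simp [hxx']), Finset.card_singleton]
    omega
  obtain ⟨γ, hγ⟩ : ∃ γ : C, γ ∉ S := by
    by_contra h
    push_neg at h
    have : S = Finset.univ := Finset.eq_univ_iff_forall.mpr h
    rw [this, Finset.card_univ, hk] at hScard
    omega
  have hγfy : γ ≠ f y := fun h => hγ (by simp [hS, h])
  have hγnb : ∀ z, G.Adj y z → z ≠ x → z ≠ x' → f z ≠ γ := by
    intro z hz hzx hzx' hfz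
    apply hγ
    rw [hS]
    apply Finset.mem_insert_of_mem
    exact Finset.mem_image.mpr ⟨z, by simp [hN, hz, hzx, hzx'], hfz⟩
  have hxy : x ≠ y := fun h => G.loopless.irrefl y (h ▸ hyx)
  have hx'y : x' ≠ y := fun h => G.loopless.irrefl y (h ▸ hyx')
  set g := Function.update (Function.update (Function.update f x (f y)) x' (f y)) y γ with hg
  have hgy : g y = γ := by simp [hg]
  have hgx : g x = f y := by simp [hg, hxy, hxx']
  have hgx' : g x' = f y := by simp [hg, hx'y]
  have hgz : ∀ z, z ≠ x → z ≠ x' → z ≠ y → g z = f z := by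
    intro z h1 h2 h3; simp [hg, h1, h2, h3]
  refine ⟨γ, hγfy, hγnb, ?_⟩
  have key : ∀ a b, G.Adj a b → a = y → g a ≠ g b := by
    intro a b hab h
    rw [h] at hab ⊢
    have hby : b ≠ y := fun h => G.loopless.irrefl y (h ▸ hab)
    rw [hgy]
    by_cases hbx : b = x
    · subst hbx; rw [hgx]; exact fun h => hγfy h
    by_cases hbx' : b = x'
    · subst hbx'; rw [hgx']; exact fun h => hγfy h
    · rw [hgz b hbx hbx' hby]
      exact fun h => hγnb b hab hbx hbx' h.symm
  have keyx : ∀ a b, G.Adj a b → a = x → b ≠ y → g a ≠ g b := by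
    intro a b hab h hby
    rw [h] at hab ⊢
    rw [hgx]
    by_cases hbx : b = x
    · exact absurd (hbx ▸ hab) (G.loopless.irrefl x)
    by_cases hbx' : b = x'
    · exact absurd (hbx' ▸ hab) hnadj
    · rw [hgz b hbx hbx' hby]
      intro h
      exact hby (hsolo b hab h.symm)
  have keyx' : ∀ a b, G.Adj a b → a = x' → b ≠ y → g a ≠ g b := by
    intro a b hab h hby
    rw [h] at hab ⊢
    rw [hgx']
    by_cases hbx : b = x
    · exact absurd (hbx ▸ hab).symm hnadj
    by_cases hbx' : b = x'
    · exact absurd (hbx' ▸ hab) (G.loopless.irrefl x')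
    · rw [hgz b hbx hbx' hby]
      intro h
      exact hby (hsolo' b hab h.symm)
  intro a b hab
  show g a ≠ g b
  by_cases hay : a = y
  · exact key a b hab hay
  by_cases hby : b = y
  · exact fun h => key b a hab.symm hby h.symm
  by_cases hax : a = x
  · exact keyx a b hab hax hby
  by_cases hbx : b = x
  · exact fun h => keyx b a hab.symm hbx hay h.symm
  by_cases hax' : a = x'
  · exact keyx' a b hab hax' hby
  by_cases hbx' : b = x'
  · exact fun h => keyx' b a hab.symm hbx' hay h.symm
  · rw [hgz a hax hax' hay, hgz b hbx hbx' hby]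
    exact hf a b hab
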